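/- Supercritical energy reduction: let λ > 0, M > 0, ε ∈ (0,λ), t₁ = M/(2ε) + 2/λ, and δ(t) = λ + εt on [0,t₁]. Then there exists a nonzero solution v of v'' + 2δ(t)v' + λ²v = 0 on [0,t₁] such that |v'(t₁)|² + λ²|v(t₁)|² ≤ (|v'(0)|² + λ²|v(0)|²)·e^{−M t₁}. -/

import Mathlib

open Set intervalIntegral Filter MeasureTheory
open scoped BoundedContinuousFunction

namespace Stmt15Aux

lemma quad_deriv (a b c t : ℝ) : HasDerivAt (fun z : ℝ => a + z*b + z^2/2*c) (b + t*c) t := by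
  have h1 : HasDerivAt (fun z : ℝ => a + z * b) b t := by
    simpa using ((hasDerivAt_id t).mul_const b).const_add a
  have h2 : HasDerivAt (fun z : ℝ => z^2/2*c) (t*c) t := by
    have := ((hasDerivAt_pow 2 t).div_const 2).mul_const c
    refine this.congr_deriv ?_
    ring
  exact h1.add h2

lemma lin_deriv (b c t : ℝ) : HasDerivAt (fun z : ℝ => b + z * c) c t := by
  simpa using ((hasDerivAt_id t).mul_const c).const_add b

lemma fst_deriv {G : ℝ → ℝ × ℝ} {d : ℝ × ℝ} {t : ℝ} (h : HasDerivAt G d t) :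
    HasDerivAt (fun z => (G z).1) d.1 t := by
  have h2 := ((ContinuousLinearMap.fst ℝ ℝ ℝ).hasFDerivAt).comp t h.hasFDerivAt
  exact h2.hasDerivAt.congr_deriv (by simp)

lemma snd_deriv {G : ℝ → ℝ × ℝ} {d : ℝ × ℝ} {t : ℝ} (h : HasDerivAt G d t) :
    HasDerivAt (fun z => (G z).2) d.2 t := by
  have h2 := ((ContinuousLinearMap.snd ℝ ℝ ℝ).hasFDerivAt).comp t h.hasFDerivAt
  exact h2.hasDerivAt.congr_deriv (by simp)

lemma quad_deriv' (a b c t₀ t : ℝ) :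
    HasDerivAt (fun z : ℝ => a + (z - t₀)*b + (z - t₀)^2/2*c) (b + (t - t₀)*c) t := by
  have h1 : HasDerivAt (fun z : ℝ => z - t₀) 1 t := by
    simpa using (hasDerivAt_id t).sub_const t₀
  have h2 := (quad_deriv a b c (t - t₀)).comp t h1
  exact h2.congr_deriv (mul_one _)

lemma lin_deriv' (b c t₀ t : ℝ) : HasDerivAt (fun z : ℝ => b + (z - t₀) * c) c t := by
  have h1 : HasDerivAt (fun z : ℝ => z - t₀) 1 t := by
    simpa using (hasDerivAt_id t).sub_const t₀
  have h2 := (lin_deriv b c (t - t₀)).comp t h1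
  exact h2.congr_deriv (mul_one _)

lemma exists_sol (lam ε t₁ : ℝ) (hlam : 0 < lam) (hε : 0 < ε) (ht₁ : 0 < t₁) :
    ∃ v v₁ v₂ : ℝ → ℝ,
      (∀ t, HasDerivAt v (v₁ t) t) ∧ (∀ t, HasDerivAt v₁ (v₂ t) t) ∧ Continuous v₂ ∧
      (∀ t ∈ Set.Icc (0:ℝ) t₁, v₂ t = -(2*(lam + ε*t))*(v₁ t) - lam^2 * v t) ∧
      v t₁ = 1 ∧ v₁ t₁ = -(2*(lam + ε*t₁)) := by
  classical
  set K : ℝ := 1 + (2 * (lam + ε * t₁) + lam ^ 2) with hKdef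
  have hK1 : (1:ℝ) ≤ K := by nlinarith [sq_nonneg lam, mul_pos hε ht₁]
  have hK0 : (0:ℝ) < K := lt_of_lt_of_le one_pos hK1
  set f : ℝ → ℝ × ℝ → ℝ × ℝ := fun s x => (x.2, -(2*(lam + ε*s))*x.2 - lam^2*x.1) with hfdef
  set cl : ℝ → ℝ := fun t => max 0 (min t t₁) with hcldef
  have hcl_cont : Continuous cl := continuous_const.max (continuous_id.min continuous_const)
  have hcl_mem : ∀ t, cl t ∈ Icc (0:ℝ) t₁ :=
    fun t => ⟨le_max_left _ _, max_le ht₁.le (min_le_right _ _)⟩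
  have hcl_eq : ∀ t ∈ Icc (0:ℝ) t₁, cl t = t := by
    intro t ht
    simp only [hcldef]
    rw [min_eq_left ht.2, max_eq_right ht.1]
  have hcl_idem : ∀ t, cl (cl t) = cl t := fun t => hcl_eq _ (hcl_mem t)
  have hcl_nonpos : ∀ t ≤ (0:ℝ), cl t = 0 := by
    intro t ht
    simp only [hcldef]
    rw [max_eq_left (le_trans (min_le_left _ _) ht)]
  have hcl_ge : ∀ t, t₁ ≤ t → cl t = t₁ := by
    intro t ht
    simp only [hcldef]
    rw [min_eq_right ht, max_eq_right ht₁.le]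
  -- Lipschitz property of f in the state variable, for times in [0, t₁]
  have hf_lip : ∀ s ∈ Icc (0:ℝ) t₁, ∀ x y : ℝ × ℝ, dist (f s x) (f s y) ≤ K * dist x y := by
    intro s hs x y
    have hd1 : dist x.1 y.1 ≤ dist x y := by rw [Prod.dist_eq]; exact le_max_left _ _
    have hd2 : dist x.2 y.2 ≤ dist x y := by rw [Prod.dist_eq]; exact le_max_right _ _
    rw [Real.dist_eq] at hd1 hd2
    have hd1' := abs_le.1 hd1
    have hd2' := abs_le.1 hd2
    have hdn : 0 ≤ dist x y := dist_nonneg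
    have hs0 : 0 ≤ s := hs.1
    have hs1 : s ≤ t₁ := hs.2
    rw [hfdef]
    rw [Prod.dist_eq]
    apply max_le
    · simp only []
      rw [Real.dist_eq]
      rcases hd2' with ⟨h1, h2⟩
      rw [abs_le]
      constructor <;> nlinarith
    · simp only []
      rw [Real.dist_eq]
      have he : (-(2*(lam + ε*s))*x.2 - lam^2*x.1) - (-(2*(lam + ε*s))*y.2 - lam^2*y.1)
          = -(2*(lam + ε*s))*(x.2 - y.2) - lam^2*(x.1 - y.1) := by ring
      rw [he, abs_le]
      rcases hd1' with ⟨h1a, h1b⟩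
      rcases hd2' with ⟨h2a, h2b⟩
      have hc0 : 0 ≤ lam + ε * s := by positivity
      have hP1 : 0 ≤ (lam + ε*s) * (x.2 - y.2 + dist x y) := mul_nonneg hc0 (by linarith)
      have hP2 : 0 ≤ (lam + ε*s) * (dist x y - (x.2 - y.2)) := mul_nonneg hc0 (by linarith)
      have hP3 : 0 ≤ lam^2 * (x.1 - y.1 + dist x y) := mul_nonneg (sq_nonneg lam) (by linarith)
      have hP4 : 0 ≤ lam^2 * (dist x y - (x.1 - y.1)) := mul_nonneg (sq_nonneg lam) (by linarith)
      have hP5 : 0 ≤ ε * (t₁ - s) * dist x y :=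
        mul_nonneg (mul_nonneg hε.le (by linarith)) hdn
      constructor <;> [nlinarith [hP2, hP4, hP5, hdn]; nlinarith [hP1, hP3, hP5, hdn]]
  -- continuity of the integrand associated with a bounded continuous curve
  have hFcont : ∀ u : ℝ →ᵇ ℝ × ℝ, Continuous (fun s => f s (u (cl s))) := by
    intro u
    have hu : Continuous fun s => u (cl s) := u.continuous.comp hcl_cont
    have h1 : Continuous fun s => (u (cl s)).1 := hu.fst
    have h2 : Continuous fun s => (u (cl s)).2 := hu.snd
    rw [hfdef]
    refine Continuous.prodMk h2 ?_
    have hc : Continuous fun s : ℝ => -(2*(lam + ε*s)) :=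
      (continuous_const.mul (continuous_const.add (continuous_const.mul continuous_id))).neg
    exact (hc.mul h2).sub (continuous_const.mul h1)
  set x₀ : ℝ × ℝ := (1, -(2*(lam + ε * t₁))) with hx₀def
  -- the primitive has a derivative everywhere
  have hP : ∀ u : ℝ →ᵇ ℝ × ℝ, ∀ y : ℝ,
      HasDerivAt (fun z => x₀ + ∫ s in t₁..z, f s (u (cl s))) (f y (u (cl y))) y := by
    intro u y
    exact HasDerivAt.const_add x₀ (((hFcont u).integral_hasStrictDerivAt t₁ y).hasDerivAt)
  have hPc : ∀ u : ℝ →ᵇ ℝ × ℝ, Continuous (fun z => x₀ + ∫ s in t₁..z, f s (u (cl s))) :=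
    fun u => continuous_iff_continuousAt.2 fun y => (hP u y).continuousAt
  have hbound : ∀ u : ℝ →ᵇ ℝ × ℝ, ∃ C, ∀ t,
      ‖x₀ + ∫ s in t₁..(cl t), f s (u (cl s))‖ ≤ C := by
    intro u
    obtain ⟨C, hC⟩ := (isCompact_Icc (a := (0:ℝ)) (b := t₁)).exists_bound_of_continuousOn
      (hPc u).continuousOn
    exact ⟨C, fun t => hC _ (hcl_mem t)⟩
  set Φ : (ℝ →ᵇ ℝ × ℝ) → (ℝ →ᵇ ℝ × ℝ) := fun u =>
    BoundedContinuousFunction.ofNormedAddCommGroup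
      (fun t => x₀ + ∫ s in t₁..(cl t), f s (u (cl s)))
      ((hPc u).comp hcl_cont) (hbound u).choose (hbound u).choose_spec with hΦdef
  have hΦapp : ∀ (u : ℝ →ᵇ ℝ × ℝ) (t : ℝ),
      Φ u t = x₀ + ∫ s in t₁..(cl t), f s (u (cl s)) := fun u t => rfl
  -- iterated contraction estimate
  have hiter : ∀ n : ℕ, ∀ u w : ℝ →ᵇ ℝ × ℝ, ∀ t : ℝ,
      dist (Φ^[n] u t) (Φ^[n] w t) ≤ K ^ n * (t₁ - cl t) ^ n / n.factorial * dist u w := by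
    intro n
    induction n with
    | zero =>
      intro u w t
      simpa using BoundedContinuousFunction.dist_coe_le_dist t
    | succ n ih =>
      intro u w t
      rw [Function.iterate_succ_apply', Function.iterate_succ_apply']
      set a := Φ^[n] u with ha
      set b := Φ^[n] w with hb
      rw [hΦapp, hΦapp, dist_eq_norm]
      have hIa : IntervalIntegrable (fun s => f s (a (cl s))) volume t₁ (cl t) :=
        (hFcont a).intervalIntegrable _ _
      have hIb : IntervalIntegrable (fun s => f s (b (cl s))) volume t₁ (cl t) :=
        (hFcont b).intervalIntegrable _ _
      have h1 : (x₀ + ∫ s in t₁..(cl t), f s (a (cl s))) - (x₀ + ∫ s in t₁..(cl t), f s (b (cl s)))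
          = -∫ s in (cl t)..t₁, (f s (a (cl s)) - f s (b (cl s))) := by
        have e1 : (∫ s in (cl t)..t₁, (f s (a (cl s)) - f s (b (cl s))))
            = (∫ s in (cl t)..t₁, f s (a (cl s))) - ∫ s in (cl t)..t₁, f s (b (cl s)) :=
          intervalIntegral.integral_sub hIa.symm hIb.symm
        rw [e1, intervalIntegral.integral_symm t₁ (cl t) (f := fun s => f s (a (cl s))),
          intervalIntegral.integral_symm t₁ (cl t) (f := fun s => f s (b (cl s)))]
        abel
      rw [h1, norm_neg]
      set c := cl t with hc
      have hc0 : 0 ≤ c := (hcl_mem t).1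
      have hc1 : c ≤ t₁ := (hcl_mem t).2
      set D := dist u w with hD
      have hD0 : 0 ≤ D := dist_nonneg
      set g : ℝ → ℝ := fun s => K ^ (n+1) * D / n.factorial * (t₁ - s) ^ n with hgdef
      have hgint : IntervalIntegrable g volume c t₁ := by
        apply Continuous.intervalIntegrable
        exact continuous_const.mul ((continuous_const.sub continuous_id).pow n)
      have hae : ∀ᵐ s ∂(volume.restrict (Set.uIoc c t₁)),
          ‖f s (a (cl s)) - f s (b (cl s))‖ ≤ g s := by
        refine (ae_restrict_iff' measurableSet_uIoc).2 (Filter.Eventually.of_forall ?_)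
        intro s hs
        rw [Set.uIoc_of_le hc1] at hs
        have hsmem : s ∈ Icc (0:ℝ) t₁ := ⟨le_trans hc0 hs.1.le, hs.2⟩
        have hcls : cl s = s := hcl_eq s hsmem
        rw [← dist_eq_norm, hcls]
        refine (hf_lip s hsmem (a s) (b s)).trans ?_
        have hih := ih u w (cl s)
        rw [← ha, ← hb, hcl_idem s, hcls] at hih
        have hKn : (0:ℝ) ≤ K := hK0.le
        have := mul_le_mul_of_nonneg_left hih hKn
        refine this.trans (le_of_eq ?_)
        rw [hgdef]
        field_simp
        ring
      have hle := intervalIntegral.norm_integral_le_abs_of_norm_le hae hgint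
      refine hle.trans (le_of_eq ?_)
      have hgval : (∫ s in c..t₁, g s) = K ^ (n+1) * D / n.factorial * ((t₁ - c)^(n+1)/(n+1)) := by
        rw [hgdef]
        rw [intervalIntegral.integral_const_mul]
        congr 1
        rw [intervalIntegral.integral_comp_sub_left (fun y => y ^ n) t₁]
        rw [sub_self, integral_pow]
        simp
      rw [hgval, abs_of_nonneg]
      · rw [Nat.factorial_succ]
        have hne1 : ((n:ℝ) + 1) ≠ 0 := by positivity
        have hne2 : ((n.factorial :ℝ)) ≠ 0 := Nat.cast_ne_zero.2 n.factorial_ne_zero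
        push_cast
        field_simp
      · have : (0:ℝ) ≤ t₁ - c := by linarith
        positivity
  have hsup : ∀ n : ℕ, ∀ u w : ℝ →ᵇ ℝ × ℝ,
      dist (Φ^[n] u) (Φ^[n] w) ≤ (K*t₁)^n / n.factorial * dist u w := by
    intro n u w
    have hnn : (0:ℝ) ≤ (K*t₁)^n / n.factorial * dist u w := by positivity
    refine (BoundedContinuousFunction.dist_le hnn).2 fun t => ?_
    refine (hiter n u w t).trans ?_
    have h1 : (0:ℝ) ≤ t₁ - cl t := sub_nonneg.2 (hcl_mem t).2
    have h2 : t₁ - cl t ≤ t₁ := by have := (hcl_mem t).1; linarith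
    have h3 : K^n * (t₁ - cl t)^n ≤ (K*t₁)^n := by
      rw [mul_pow]
      exact mul_le_mul_of_nonneg_left (pow_le_pow_left₀ h1 h2 n) (pow_nonneg hK0.le n)
    have h4 : (0:ℝ) < (n.factorial : ℝ) := by
      exact_mod_cast n.factorial_pos
    gcongr
  obtain ⟨n, hn⟩ : ∃ n : ℕ, (K*t₁)^n / n.factorial < 1 := by
    have h := (FloorSemiring.tendsto_pow_div_factorial_atTop (K := ℝ) (K*t₁)).eventually
      (gt_mem_nhds one_pos)
    exact h.exists
  have hnn : (0:ℝ) ≤ (K*t₁)^n / n.factorial := by positivity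
  set Kc : NNReal := Real.toNNReal ((K*t₁)^n / n.factorial) with hKc
  have hKccoe : (Kc : ℝ) = (K*t₁)^n / n.factorial := Real.coe_toNNReal _ hnn
  haveI : Nonempty (ℝ →ᵇ ℝ × ℝ) := ⟨0⟩
  have hcontr : ContractingWith Kc (Φ^[n]) := by
    constructor
    · rw [← NNReal.coe_lt_coe, hKccoe]
      simpa using hn
    · refine LipschitzWith.of_dist_le_mul fun x y => ?_
      rw [hKccoe]
      exact hsup n x y
  set u : ℝ →ᵇ ℝ × ℝ := ContractingWith.fixedPoint (Φ^[n]) hcontr with hudef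
  have hufix : Function.IsFixedPt (Φ^[n]) u := ContractingWith.fixedPoint_isFixedPt hcontr
  have hu : Φ u = u := by
    have h1 : Function.IsFixedPt (Φ^[n]) (Φ u) := by
      unfold Function.IsFixedPt
      rw [← Function.iterate_succ_apply Φ n u, Function.iterate_succ_apply' Φ n u, hufix.eq]
    have h2 := hcontr.fixedPoint_unique h1
    rw [h2, ← hudef]
  have hu_eq : ∀ t, u t = x₀ + ∫ s in t₁..(cl t), f s (u (cl s)) := by
    intro t
    conv_lhs => rw [← hu]
    exact hΦapp u t
  set G : ℝ → ℝ × ℝ := fun z => x₀ + ∫ s in t₁..z, f s (u (cl s)) with hGdef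
  have hGd : ∀ y, HasDerivAt G (f y (u (cl y))) y := hP u
  have hGu : ∀ t ∈ Icc (0:ℝ) t₁, G t = u t := by
    intro t ht
    rw [hu_eq t, hcl_eq t ht]
  -- the candidate solution and its first two derivatives
  set v₂ : ℝ → ℝ := fun t => (f (cl t) (u (cl t))).2 with hv₂def
  set v₁ : ℝ → ℝ := fun t => (u (cl t)).2 + (t - cl t) * v₂ t with hv₁def
  set v : ℝ → ℝ := fun t => (u (cl t)).1 + (t - cl t) * (u (cl t)).2 + (t - cl t)^2/2 * v₂ t
    with hvdef
  -- gluing lemma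
  have glue : ∀ (F F' : ℝ → ℝ),
      (∀ t ≤ (0:ℝ), HasDerivWithinAt F (F' t) (Iic 0) t) →
      (∀ t ∈ Icc (0:ℝ) t₁, HasDerivWithinAt F (F' t) (Icc 0 t₁) t) →
      (∀ t, t₁ ≤ t → HasDerivWithinAt F (F' t) (Ici t₁) t) →
      ∀ t, HasDerivAt F (F' t) t := by
    intro F F' hA hB hC t
    rcases lt_trichotomy t 0 with h0 | h0 | h0
    · exact (hA t h0.le).hasDerivAt (Iic_mem_nhds h0)
    · subst h0
      have h := (hA 0 le_rfl).union (hB 0 ⟨le_rfl, ht₁.le⟩)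
      rw [Set.Iic_union_Icc_eq_Iic ht₁.le] at h
      exact h.hasDerivAt (Iic_mem_nhds ht₁)
    · rcases lt_trichotomy t t₁ with h1 | h1 | h1
      · exact (hB t ⟨h0.le, h1.le⟩).hasDerivAt (Icc_mem_nhds h0 h1)
      · subst h1
        have h := (hB t ⟨h0.le, le_rfl⟩).union (hC t le_rfl)
        rw [Set.Icc_union_Ici_eq_Ici h0.le] at h
        exact h.hasDerivAt (Ici_mem_nhds h0)
      · exact (hC t h1.le).hasDerivAt (Ici_mem_nhds h1)
  -- derivative of v
  have hvd : ∀ t, HasDerivAt v (v₁ t) t := by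
    refine glue v v₁ ?_ ?_ ?_
    · intro t ht
      have hq := (quad_deriv ((u 0).1) ((u 0).2) ((f 0 (u 0)).2) t).hasDerivWithinAt
        (s := Iic (0:ℝ))
      have hveq : ∀ s ∈ Iic (0:ℝ), v s
          = (u 0).1 + s * (u 0).2 + s^2/2 * (f 0 (u 0)).2 := by
        intro s hs
        simp only [hvdef, hv₂def, hcl_nonpos s hs, sub_zero]
      have hval : v₁ t = (u 0).2 + t * (f 0 (u 0)).2 := by
        simp only [hv₁def, hv₂def, hcl_nonpos t ht, sub_zero]
      rw [hval]
      exact hq.congr hveq (hveq t ht)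
    · intro t ht
      have hGt : HasDerivWithinAt (fun z => (G z).1) (f t (u (cl t))).1 (Icc 0 t₁) t :=
        (fst_deriv (hGd t)).hasDerivWithinAt
      have hveq : ∀ s ∈ Icc (0:ℝ) t₁, v s = (G s).1 := by
        intro s hs
        rw [hGu s hs]
        simp only [hvdef, hcl_eq s hs]
        ring
      have hval : v₁ t = (f t (u (cl t))).1 := by
        simp only [hv₁def, hfdef, hcl_eq t ht]
        ring
      rw [hval]
      exact hGt.congr hveq (hveq t ht)
    · intro t ht
      have hq := (quad_deriv' ((u t₁).1) ((u t₁).2) ((f t₁ (u t₁)).2) t₁ t).hasDerivWithinAt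
        (s := Ici t₁)
      have hveq : ∀ s ∈ Ici t₁, v s
          = (u t₁).1 + (s - t₁) * (u t₁).2 + (s - t₁)^2/2 * (f t₁ (u t₁)).2 := by
        intro s hs
        simp only [hvdef, hv₂def, hcl_ge s hs]
      have hval : v₁ t = (u t₁).2 + (t - t₁) * (f t₁ (u t₁)).2 := by
        simp only [hv₁def, hv₂def, hcl_ge t ht]
      rw [hval]
      exact hq.congr hveq (hveq t ht)
  -- derivative of v₁
  have hv₁d : ∀ t, HasDerivAt v₁ (v₂ t) t := by
    refine glue v₁ v₂ ?_ ?_ ?_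
    · intro t ht
      have hq := (lin_deriv ((u 0).2) ((f 0 (u 0)).2) t).hasDerivWithinAt (s := Iic (0:ℝ))
      have hveq : ∀ s ∈ Iic (0:ℝ), v₁ s = (u 0).2 + s * (f 0 (u 0)).2 := by
        intro s hs
        simp only [hv₁def, hv₂def, hcl_nonpos s hs, sub_zero]
      have hval : v₂ t = (f 0 (u 0)).2 := by
        simp only [hv₂def, hcl_nonpos t ht]
      rw [hval]
      exact hq.congr hveq (hveq t ht)
    · intro t ht
      have hGt : HasDerivWithinAt (fun z => (G z).2) (f t (u (cl t))).2 (Icc 0 t₁) t :=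
        (snd_deriv (hGd t)).hasDerivWithinAt
      have hveq : ∀ s ∈ Icc (0:ℝ) t₁, v₁ s = (G s).2 := by
        intro s hs
        rw [hGu s hs]
        simp only [hv₁def, hcl_eq s hs]
        ring
      have hval : v₂ t = (f t (u (cl t))).2 := by
        simp only [hv₂def, hcl_eq t ht]
      rw [hval]
      exact hGt.congr hveq (hveq t ht)
    · intro t ht
      have hq := (lin_deriv' ((u t₁).2) ((f t₁ (u t₁)).2) t₁ t).hasDerivWithinAt (s := Ici t₁)
      have hveq : ∀ s ∈ Ici t₁, v₁ s = (u t₁).2 + (s - t₁) * (f t₁ (u t₁)).2 := by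
        intro s hs
        simp only [hv₁def, hv₂def, hcl_ge s hs]
      have hval : v₂ t = (f t₁ (u t₁)).2 := by
        simp only [hv₂def, hcl_ge t ht]
      rw [hval]
      exact hq.congr hveq (hveq t ht)
  -- continuity of v₂
  have hv₂c : Continuous v₂ := by
    have hucl : Continuous fun t => u (cl t) := u.continuous.comp hcl_cont
    have hc : Continuous fun t : ℝ => -(2*(lam + ε * cl t)) :=
      (continuous_const.mul (continuous_const.add (continuous_const.mul hcl_cont))).neg
    simp only [hv₂def, hfdef]
    exact (hc.mul hucl.snd).sub (continuous_const.mul hucl.fst)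
  -- the ODE on [0, t₁]
  have hODE : ∀ t ∈ Icc (0:ℝ) t₁, v₂ t = -(2*(lam + ε*t))*(v₁ t) - lam^2 * v t := by
    intro t ht
    simp only [hv₂def, hv₁def, hvdef, hfdef, hcl_eq t ht]
    ring
  -- terminal values
  have hut₁ : u t₁ = x₀ := by
    have h := hu_eq t₁
    rw [hcl_ge t₁ le_rfl, intervalIntegral.integral_same, add_zero] at h
    exact h
  have hvt₁ : v t₁ = 1 := by
    simp only [hvdef, hcl_ge t₁ le_rfl, sub_self, hut₁, hx₀def]
    norm_num
  have hv₁t₁ : v₁ t₁ = -(2*(lam + ε*t₁)) := by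
    simp only [hv₁def, hcl_ge t₁ le_rfl, sub_self, hut₁, hx₀def]
    norm_num
  exact ⟨v, v₁, v₂, hvd, hv₁d, hv₂c, hODE, hvt₁, hv₁t₁⟩

lemma num_ineq (lam M ε t₁ : ℝ) (hlam : 0 < lam) (hM : 0 < M) (hε : 0 < ε)
    (ht₁ : t₁ = M/(2*ε) + 2/lam) :
    4*(lam + ε*t₁)^2 + lam^2 ≤ 2*lam^2 * Real.exp (2*(lam*t₁ + ε*t₁^2) - M*t₁) := by
  have ht₁pos : 0 < t₁ := by rw [ht₁]; positivity
  set b := ε*t₁/lam with hb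
  have hb0 : 0 < b := by positivity
  have h2e : 2*ε*t₁ = M + 4*ε/lam := by
    rw [ht₁]; field_simp; ring
  have hkey : 2*(lam*t₁ + ε*t₁^2) - M*t₁ = 2*(lam*t₁) + 4*b := by
    rw [hb]
    linear_combination t₁ * h2e
  have hlam2 : 2 ≤ lam * t₁ := by
    have h : lam * t₁ = lam*M/(2*ε) + 2 := by rw [ht₁]; field_simp
    rw [h]
    have : 0 ≤ lam*M/(2*ε) := by positivity
    linarith
  have hεt : ε*t₁ = lam * b := by rw [hb]; field_simp
  rw [hkey]
  have he1 : 3 + 2*b ≤ Real.exp (2 + 2*b) := by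
    have := Real.add_one_le_exp (2+2*b); linarith
  have he2 : Real.exp (2+2*b) * Real.exp (2+2*b) = Real.exp (4 + 4*b) := by
    rw [← Real.exp_add]; ring_nf
  have he3 : Real.exp (4+4*b) ≤ Real.exp (2*(lam*t₁) + 4*b) := by
    apply Real.exp_le_exp.2; linarith
  have hsq : (3+2*b)^2 ≤ Real.exp (4+4*b) := by
    rw [← he2]; nlinarith [he1, hb0]
  have hc1 : 2*lam^2*(3+2*b)^2 ≤ 2*lam^2*Real.exp (4+4*b) := by
    nlinarith [hsq, sq_nonneg lam]
  have hc2 : 2*lam^2*Real.exp (4+4*b) ≤ 2*lam^2*Real.exp (2*(lam*t₁)+4*b) := by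
    nlinarith [he3, sq_nonneg lam]
  have hc3 : 4*(lam+ε*t₁)^2 + lam^2 ≤ 2*lam^2*(3+2*b)^2 := by
    rw [hεt]
    nlinarith [mul_nonneg (sq_nonneg lam) hb0.le, mul_nonneg (sq_nonneg lam) (sq_nonneg b)]
  linarith [hc1, hc2, hc3]

end Stmt15Aux

/-- Supercritical energy reduction: with `δ(t) = λ + εt` on `[0,t₁]`,
`t₁ = M/(2ε) + 2/λ`, there is a nonzero solution whose energy is reduced by
a factor `e^{−Mt₁}`. -/
theorem stmt_15 (lam M ε : ℝ) (hlam : 0 < lam) (hM : 0 < M)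
    (hε : 0 < ε) (hεlam : ε < lam) :
    let t₁ := M / (2 * ε) + 2 / lam
    ∃ v : ℝ → ℝ, ContDiff ℝ 2 v ∧
      (∀ t ∈ Set.Icc (0:ℝ) t₁,
        deriv (deriv v) t + 2 * (lam + ε * t) * deriv v t + lam ^ 2 * v t = 0) ∧
      (v 0) ^ 2 + (deriv v 0) ^ 2 ≠ 0 ∧
      (deriv v t₁) ^ 2 + lam ^ 2 * (v t₁) ^ 2 ≤
        ((deriv v 0) ^ 2 + lam ^ 2 * (v 0) ^ 2) * Real.exp (-M * t₁) := by
  intro t₁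
  have ht₁def : t₁ = M / (2 * ε) + 2 / lam := rfl
  have ht₁pos : 0 < t₁ := by rw [ht₁def]; positivity
  obtain ⟨v, v₁, v₂, hvd, hv₁d, hv₂c, hODE, hvt₁, hv₁t₁⟩ :=
    Stmt15Aux.exists_sol lam ε t₁ hlam hε ht₁pos
  have hvc : Continuous v := continuous_iff_continuousAt.2 fun t => (hvd t).continuousAt
  have hv₁c : Continuous v₁ := continuous_iff_continuousAt.2 fun t => (hv₁d t).continuousAt
  set p : ℝ → ℝ := fun t => -(v₁ t) - (lam + 2*ε*t) * v t with hpdef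
  have hlin : Continuous fun t : ℝ => lam + 2*ε*t :=
    continuous_const.add (continuous_const.mul continuous_id)
  have hpc : Continuous p := hv₁c.neg.sub (hlin.mul hvc)
  have hpd : ∀ t, HasDerivAt p (-(v₂ t) - (2*ε * v t + (lam+2*ε*t) * v₁ t)) t := by
    intro t
    have ha : HasDerivAt (fun s : ℝ => lam + 2*ε*s) (2*ε) t := by
      simpa using ((hasDerivAt_id t).const_mul (2*ε)).const_add lam
    have hm := ha.mul (hvd t)
    exact ((hv₁d t).neg).sub hm
  have hexp1 : ∀ t : ℝ, HasDerivAt (fun s => Real.exp (lam*s)) (lam * Real.exp (lam*t)) t := by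
    intro t
    have h := ((hasDerivAt_id t).const_mul lam).exp
    simpa [mul_comm] using h
  -- derivative of the weighted quantity e^{lam t} p t on [0, t₁]
  have hφd : ∀ x ∈ Set.Icc (0:ℝ) t₁,
      HasDerivAt (fun s => Real.exp (lam*s) * p s)
        (-(2*ε)*((lam*x+1)*(Real.exp (lam*x) * v x))) x := by
    intro x hx
    have h := (hexp1 x).mul (hpd x)
    have hO := hODE x hx
    refine h.congr_deriv ?_
    rw [hO, hpdef]
    ring
  have hintc : Continuous fun x : ℝ => -(2*ε)*((lam*x+1)*(Real.exp (lam*x) * v x)) := by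
    have h1 : Continuous fun x : ℝ => lam*x+1 :=
      (continuous_const.mul continuous_id).add continuous_const
    have h2 : Continuous fun x : ℝ => Real.exp (lam*x) :=
      Real.continuous_exp.comp (continuous_const.mul continuous_id)
    exact continuous_const.mul (h1.mul (h2.mul hvc))
  have hA : ∀ s ∈ Set.Icc (0:ℝ) t₁,
      (∫ x in s..t₁, (-(2*ε)*((lam*x+1)*(Real.exp (lam*x) * v x))))
        = Real.exp (lam*t₁) * p t₁ - Real.exp (lam*s) * p s := by
    intro s hs
    refine intervalIntegral.integral_eq_sub_of_hasDerivAt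
      (f := fun z => Real.exp (lam*z) * p z)
      (f' := fun x => -(2*ε)*((lam*x+1)*(Real.exp (lam*x) * v x))) ?_
      (hintc.intervalIntegrable _ _)
    intro x hx
    rw [Set.uIcc_of_le hs.2] at hx
    exact hφd x ⟨le_trans hs.1 hx.1, hx.2⟩
  have hpt₁ : p t₁ = lam := by
    rw [hpdef]
    simp only
    rw [hvt₁, hv₁t₁]
    ring
  -- derivative of the weighted quantity e^{lam t + eps t^2} v t, everywhere
  have hψd : ∀ x : ℝ, HasDerivAt (fun s => Real.exp (lam*s + ε*s^2) * v s)
      (-(Real.exp (lam*x + ε*x^2) * p x)) x := by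
    intro x
    have hBq : HasDerivAt (fun s : ℝ => lam*s + ε*s^2) (lam + 2*ε*x) x := by
      have h1 : HasDerivAt (fun s : ℝ => lam*s) lam x := by
        simpa using (hasDerivAt_id x).const_mul lam
      have h2 : HasDerivAt (fun s : ℝ => ε*s^2) (ε*(2*x)) x := by
        have := (hasDerivAt_pow 2 x).const_mul ε
        simpa using this
      have h3 := h1.add h2
      refine h3.congr_deriv ?_
      ring
    have h := hBq.exp.mul (hvd x)
    refine h.congr_deriv ?_
    rw [hpdef]
    ring
  have hψc : Continuous fun x : ℝ => -(Real.exp (lam*x + ε*x^2) * p x) := by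
    have h2 : Continuous fun x : ℝ => Real.exp (lam*x + ε*x^2) :=
      Real.continuous_exp.comp ((continuous_const.mul continuous_id).add
        (continuous_const.mul (continuous_pow 2)))
    exact (h2.mul hpc).neg
  have hψint : ∀ s, s ≤ t₁ →
      (∫ x in s..t₁, -(Real.exp (lam*x + ε*x^2) * p x))
        = Real.exp (lam*t₁ + ε*t₁^2) * v t₁ - Real.exp (lam*s + ε*s^2) * v s := by
    intro s hs
    refine intervalIntegral.integral_eq_sub_of_hasDerivAt
      (f := fun z => Real.exp (lam*z + ε*z^2) * v z)
      (f' := fun x => -(Real.exp (lam*x + ε*x^2) * p x))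
      (fun x _ => hψd x) (hψc.intervalIntegrable _ _)
  -- p is nonnegative wherever v is nonnegative up to t₁
  have hp_of_v : ∀ c, c ∈ Set.Icc (0:ℝ) t₁ → (∀ x ∈ Set.Icc c t₁, 0 ≤ v x) →
      ∀ s ∈ Set.Icc c t₁, 0 ≤ p s := by
    intro c hc hvge s hs
    have hsmem : s ∈ Set.Icc (0:ℝ) t₁ := ⟨le_trans hc.1 hs.1, hs.2⟩
    have hid := hA s hsmem
    have hint : (∫ x in s..t₁, (-(2*ε)*((lam*x+1)*(Real.exp (lam*x) * v x)))) ≤ 0 := by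
      have heq : (∫ x in s..t₁, (-(2*ε)*((lam*x+1)*(Real.exp (lam*x) * v x))))
          = - ∫ x in s..t₁, ((2*ε)*((lam*x+1)*(Real.exp (lam*x) * v x))) := by
        rw [← intervalIntegral.integral_neg]
        congr 1
        funext x
        ring
      rw [heq, neg_nonpos]
      apply intervalIntegral.integral_nonneg hs.2
      intro x hx
      have hx0 : (0:ℝ) ≤ x := le_trans hsmem.1 hx.1
      have hvx : 0 ≤ v x := hvge x ⟨le_trans hs.1 hx.1, hx.2⟩
      have hl1 : (0:ℝ) ≤ lam*x+1 := by nlinarith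
      exact mul_nonneg (by positivity) (mul_nonneg hl1 (mul_nonneg (Real.exp_pos _).le hvx))
    rw [hpt₁] at hid
    have h3 : (0:ℝ) ≤ Real.exp (lam*t₁) * lam := by positivity
    have h2 : 0 ≤ Real.exp (lam*s) * p s := by linarith
    by_contra hneg
    push_neg at hneg
    nlinarith [mul_pos (Real.exp_pos (lam*s)) (neg_pos.2 hneg)]
  -- v is positive on [0, t₁]
  have hvpos : ∀ t ∈ Set.Icc (0:ℝ) t₁, 0 < v t := by
    by_contra hcon
    push_neg at hcon
    obtain ⟨τ₀, hτ₀mem, hτ₀⟩ := hcon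
    set S : Set ℝ := {t | t ∈ Set.Icc (0:ℝ) t₁ ∧ v t ≤ 0} with hSdef
    have hSne : S.Nonempty := ⟨τ₀, hτ₀mem, hτ₀⟩
    have hSb : BddAbove S := BddAbove.mono (fun x hx => hx.1) bddAbove_Icc
    have hScl : IsClosed S := by
      have he : S = Set.Icc (0:ℝ) t₁ ∩ {t | v t ≤ 0} := rfl
      rw [he]
      exact isClosed_Icc.inter (isClosed_le hvc continuous_const)
    set τ := sSup S with hτdef
    have hτS : τ ∈ S := hScl.csSup_mem hSne hSb
    have hτmem : τ ∈ Set.Icc (0:ℝ) t₁ := hτS.1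
    have hτv : v τ ≤ 0 := hτS.2
    have hτlt : τ < t₁ := by
      rcases lt_or_eq_of_le hτmem.2 with h | h
      · exact h
      · exfalso; rw [h, hvt₁] at hτv; linarith
    have hgt : ∀ t, τ < t → t ≤ t₁ → 0 < v t := by
      intro t h1 h2
      by_contra hle
      push_neg at hle
      have hmem : t ∈ S := ⟨⟨le_trans hτmem.1 h1.le, h2⟩, hle⟩
      exact absurd (le_csSup hSb hmem) (not_le.2 h1)
    have hτge : 0 ≤ v τ := by
      have htend : Filter.Tendsto v (nhdsWithin τ (Set.Ioi τ)) (nhds (v τ)) :=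
        hvc.continuousAt.continuousWithinAt
      refine ge_of_tendsto htend ?_
      filter_upwards [Ioc_mem_nhdsGT_of_mem ⟨le_refl τ, hτlt⟩] with x hx
      exact (hgt x hx.1 hx.2).le
    have hτ0 : v τ = 0 := le_antisymm hτv hτge
    have hvge : ∀ x ∈ Set.Icc τ t₁, 0 ≤ v x := by
      intro x hx
      rcases eq_or_lt_of_le hx.1 with h | h
      · rw [← h, hτ0]
      · exact (hgt x h hx.2).le
    have hpge := hp_of_v τ hτmem hvge
    have hid2 := hψint τ hτmem.2
    rw [hvt₁, hτ0] at hid2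
    have hint2 : (∫ x in τ..t₁, -(Real.exp (lam*x + ε*x^2) * p x)) ≤ 0 := by
      rw [intervalIntegral.integral_neg, neg_nonpos]
      apply intervalIntegral.integral_nonneg hτmem.2
      intro x hx
      exact mul_nonneg (Real.exp_pos _).le (hpge x hx)
    nlinarith [Real.exp_pos (lam*t₁ + ε*t₁^2), hid2, hint2]
  -- consequences at the endpoints
  have hvge0 : ∀ x ∈ Set.Icc (0:ℝ) t₁, 0 ≤ v x := fun x hx => (hvpos x hx).le
  have h0mem : (0:ℝ) ∈ Set.Icc (0:ℝ) t₁ := ⟨le_refl 0, ht₁pos.le⟩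
  have hpge0 := hp_of_v 0 h0mem hvge0
  have hp0 : 0 ≤ p 0 := hpge0 0 ⟨le_refl 0, ht₁pos.le⟩
  have hψ0 : Real.exp (lam*t₁ + ε*t₁^2) ≤ v 0 := by
    have hid2 := hψint 0 ht₁pos.le
    rw [hvt₁] at hid2
    have hint2 : (∫ x in (0:ℝ)..t₁, -(Real.exp (lam*x + ε*x^2) * p x)) ≤ 0 := by
      rw [intervalIntegral.integral_neg, neg_nonpos]
      apply intervalIntegral.integral_nonneg ht₁pos.le
      intro x hx
      exact mul_nonneg (Real.exp_pos _).le (hpge0 x hx)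
    have he0 : Real.exp (lam*0 + ε*0^2) = 1 := by norm_num
    rw [he0] at hid2
    nlinarith [hid2, hint2]
  have hv0pos : 0 < v 0 := lt_of_lt_of_le (Real.exp_pos _) hψ0
  have hdv : deriv v = v₁ := funext fun t => (hvd t).deriv
  have hdv₁ : deriv v₁ = v₂ := funext fun t => (hv₁d t).deriv
  refine ⟨v, ?_, ?_, ?_, ?_⟩
  · rw [show ((2:WithTop ℕ∞)) = 1 + 1 from by norm_num, contDiff_succ_iff_deriv]
    refine ⟨fun t => (hvd t).differentiableAt, by simp, ?_⟩
    rw [hdv, contDiff_one_iff_deriv]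
    exact ⟨fun t => (hv₁d t).differentiableAt, by rw [hdv₁]; exact hv₂c⟩
  · intro t ht
    rw [hdv, hdv₁, hODE t ht]
    ring
  · have hpos : 0 < (v 0)^2 + (deriv v 0)^2 :=
      add_pos_of_pos_of_nonneg (pow_pos hv0pos 2) (sq_nonneg _)
    exact ne_of_gt hpos
  · rw [hdv, hvt₁, hv₁t₁]
    have hnum := Stmt15Aux.num_ineq lam M ε t₁ hlam hM hε ht₁def
    have hv0' : Real.exp (lam*t₁+ε*t₁^2)^2 ≤ (v 0)^2 :=
      pow_le_pow_left₀ (Real.exp_pos _).le hψ0 2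
    have hsq2 : Real.exp (lam*t₁+ε*t₁^2)^2 = Real.exp (2*(lam*t₁+ε*t₁^2)) := by
      rw [sq, ← Real.exp_add]
      ring_nf
    have hp0' : lam * v 0 ≤ -(v₁ 0) := by
      rw [hpdef] at hp0
      simp only at hp0
      nlinarith [hp0]
    have hlv0 : 0 ≤ lam * v 0 := by positivity
    have hsq3 : (lam * v 0)^2 ≤ (v₁ 0)^2 := by nlinarith [hp0', hlv0]
    have hE : 2*lam^2*Real.exp (2*(lam*t₁+ε*t₁^2)) ≤ (v₁ 0)^2 + lam^2*(v 0)^2 := by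
      rw [← hsq2]
      nlinarith [hv0', hsq3, sq_nonneg lam]
    have hexpm : Real.exp (2*(lam*t₁+ε*t₁^2) - M*t₁)
        = Real.exp (2*(lam*t₁+ε*t₁^2)) * Real.exp (-M*t₁) := by
      rw [← Real.exp_add]
      ring_nf
    calc (-(2*(lam+ε*t₁)))^2 + lam^2*(1:ℝ)^2
        = 4*(lam+ε*t₁)^2 + lam^2 := by ring
      _ ≤ 2*lam^2 * Real.exp (2*(lam*t₁ + ε*t₁^2) - M*t₁) := hnum
      _ = (2*lam^2*Real.exp (2*(lam*t₁+ε*t₁^2))) * Real.exp (-M*t₁) := by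
          rw [hexpm]; ring
      _ ≤ ((v₁ 0)^2 + lam^2*(v 0)^2) * Real.exp (-M*t₁) :=
          mul_le_mul_of_nonneg_right hE (Real.exp_pos _).le
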